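/- The set {E_{jj} − E_{ji} : i ≺ j in 𝒫} is a K-basis of the row-centralized subspace K₀¹𝒫; consequently dim_K K₀¹𝒫 equals the number of pairs (i,j) with i ≺ j in 𝒫, and dim_K K¹𝒫 = 1 + |{(i,j) : i ≺ j in 𝒫}|. -/

import Mathlib

open Matrix

/-- A finite poset structure on `{1,…,n}` (modeled as `Fin n`) whose order
relation refines the natural linear order: `i ⪯ j` implies `i ≤ j`. -/
structure PosetOn (n : ℕ) where
  le : Fin n → Fin n → Prop
  le_refl : ∀ i, le i i
  le_trans : ∀ {i j k : Fin n}, le i j → le j k → le i k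
  le_compat : ∀ {i j : Fin n}, le i j → i ≤ j

/-- The strict order `i ≺ j`. -/
def PosetOn.lt {n : ℕ} (P : PosetOn n) (i j : Fin n) : Prop := P.le i j ∧ i ≠ j

/-- The incidence algebra `K𝒫` as a set of `n × n` matrices. -/
def KPset (K : Type) [Field K] {n : ℕ} (P : PosetOn n) : Set (Matrix (Fin n) (Fin n) K) :=
  {M | ∀ j i, M j i ≠ 0 → P.le i j}

/-- The row-balanced incidence algebra `K¹𝒫`. -/
def KPoneSet (K : Type) [Field K] {n : ℕ} (P : PosetOn n) : Set (Matrix (Fin n) (Fin n) K) :=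
  {M | M ∈ KPset K P ∧ ∃ c : K, M *ᵥ (fun _ => 1) = fun _ => c}

/-- The row-centralized subspace `K₀¹𝒫`. -/
def KP0Set (K : Type) [Field K] {n : ℕ} (P : PosetOn n) : Set (Matrix (Fin n) (Fin n) K) :=
  {M | M ∈ KPset K P ∧ M *ᵥ (fun _ => 1) = 0}

/-- The family `E_{jj} - E_{ji}` indexed by pairs `i ≺ j` of `𝒫`. -/
def Bfam (K : Type) [Field K] {n : ℕ} (P : PosetOn n)
    (p : {q : Fin n × Fin n // P.lt q.1 q.2}) : Matrix (Fin n) (Fin n) K :=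
  Matrix.single p.1.2 p.1.2 1 - Matrix.single p.1.2 p.1.1 1

section Aux

variable (K : Type) [Field K] {n : ℕ} (P : PosetOn n)

lemma aux_Bapp (q : {q : Fin n × Fin n // P.lt q.1 q.2}) (a b : Fin n) :
    Bfam K P q a b =
      (if q.1.2 = a ∧ q.1.2 = b then (1 : K) else 0) -
      (if q.1.2 = a ∧ q.1.1 = b then (1 : K) else 0) := by
  simp [Bfam, Matrix.sub_apply, Matrix.single, Matrix.of_apply]

lemma aux_KPset_add {A B : Matrix (Fin n) (Fin n) K} (hA : A ∈ KPset K P)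
    (hB : B ∈ KPset K P) : A + B ∈ KPset K P := by
  intro j i h0
  by_cases h : A j i = 0
  · exact hB j i (by simpa [Matrix.add_apply, h] using h0)
  · exact hA j i h

lemma aux_KPset_sub {A B : Matrix (Fin n) (Fin n) K} (hA : A ∈ KPset K P)
    (hB : B ∈ KPset K P) : A - B ∈ KPset K P := by
  intro j i h0
  by_cases h : A j i = 0
  · refine hB j i fun h' => h0 ?_
    simp [Matrix.sub_apply, h, h']
  · exact hA j i h

lemma aux_KPset_smul (c : K) {A : Matrix (Fin n) (Fin n) K} (hA : A ∈ KPset K P) :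
    c • A ∈ KPset K P := by
  intro j i h0
  exact hA j i fun h => h0 (by simp [Matrix.smul_apply, h])

/-- `K₀¹𝒫` as a submodule. -/
def KP0 : Submodule K (Matrix (Fin n) (Fin n) K) where
  carrier := KP0Set K P
  add_mem' := by
    rintro a b ⟨ha1, ha2⟩ ⟨hb1, hb2⟩
    exact ⟨aux_KPset_add K P ha1 hb1, by rw [Matrix.add_mulVec, ha2, hb2, add_zero]⟩
  zero_mem' := ⟨fun j i h0 => absurd rfl h0, by simp [Matrix.zero_mulVec]⟩
  smul_mem' := by
    rintro c a ⟨ha1, ha2⟩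
    exact ⟨aux_KPset_smul K P c ha1, by rw [Matrix.smul_mulVec, ha2, smul_zero]⟩

lemma aux_Bmem (q : {q : Fin n × Fin n // P.lt q.1 q.2}) :
    Bfam K P q ∈ KP0Set K P := by
  constructor
  · intro j i h0
    rw [aux_Bapp] at h0
    by_cases h1 : q.1.2 = j ∧ q.1.2 = i
    · obtain ⟨rfl, h2⟩ := h1
      rw [← h2]
      exact P.le_refl _
    · have h2 : q.1.2 = j ∧ q.1.1 = i := by
        by_contra h2
        simp [h1, h2] at h0
      obtain ⟨rfl, rfl⟩ := h2
      exact q.2.1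
  · funext r
    simp only [Matrix.mulVec, dotProduct, aux_Bapp, mul_one, Pi.zero_apply,
      Finset.sum_sub_distrib, ite_and]
    simp [Finset.sum_ite_eq]

lemma aux_li : LinearIndependent K (Bfam K P) := by
  classical
  rw [linearIndependent_iff']
  intro s g hs q0 hq0
  have h := congrFun (congrFun hs q0.1.2) q0.1.1
  rw [Matrix.sum_apply] at h
  have hterm : ∀ q ∈ s, (g q • Bfam K P q) q0.1.2 q0.1.1
      = if q = q0 then -g q0 else 0 := by
    intro q _
    rw [Matrix.smul_apply, aux_Bapp, smul_eq_mul]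
    by_cases h1 : q.1.2 = q0.1.2 ∧ q.1.2 = q0.1.1
    · exact absurd (h1.1 ▸ h1.2.symm) q0.2.2
    · by_cases h2 : q = q0
      · subst h2
        have hne : (q.1 : Fin n × Fin n).2 ≠ q.1.1 := fun h => q.2.2 h.symm
        simp [h1, hne]
      · have h3 : ¬(q.1.2 = q0.1.2 ∧ q.1.1 = q0.1.1) := by
          intro h3
          exact h2 (Subtype.ext (Prod.ext h3.2 h3.1))
        simp [h1, h2, h3]
  rw [Finset.sum_congr rfl hterm, Finset.sum_ite_eq' s q0, if_pos hq0] at h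
  have h0 : (0 : Matrix (Fin n) (Fin n) K) q0.1.2 q0.1.1 = 0 := rfl
  rw [h0] at h
  exact neg_eq_zero.mp h

open Classical in
lemma aux_expand [Fintype {q : Fin n × Fin n // P.lt q.1 q.2}]
    (F : Fin n × Fin n → K) :
    (∑ q : {q : Fin n × Fin n // P.lt q.1 q.2}, F q.1)
      = ∑ p : Fin n × Fin n, if P.lt p.1 p.2 then F p else 0 := by
  rw [← Finset.sum_filter]
  exact (Finset.sum_subtype _ (fun x => by simp) _).symm

open Classical in
lemma aux_decomp [Fintype {q : Fin n × Fin n // P.lt q.1 q.2}]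
    {M : Matrix (Fin n) (Fin n) K} (hM : M ∈ KP0Set K P) :
    M = ∑ q : {q : Fin n × Fin n // P.lt q.1 q.2}, (-(M q.1.2 q.1.1)) • Bfam K P q := by
  obtain ⟨hM1, hM2⟩ := hM
  have hrow : ∀ a, ∑ c, M a c = 0 := by
    intro a
    have := congrFun hM2 a
    simpa [Matrix.mulVec, dotProduct] using this
  have hzero : ∀ a b, ¬ P.le b a → M a b = 0 := by
    intro a b hle
    by_contra h0
    exact hle (hM1 a b h0)
  ext a b
  symm
  rw [Matrix.sum_apply]
  have e0 : (∑ q : {q : Fin n × Fin n // P.lt q.1 q.2},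
        ((-(M q.1.2 q.1.1)) • Bfam K P q) a b)
      = ∑ q : {q : Fin n × Fin n // P.lt q.1 q.2},
          (-(M q.1.2 q.1.1)) * ((if q.1.2 = a ∧ q.1.2 = b then (1:K) else 0) -
            (if q.1.2 = a ∧ q.1.1 = b then (1:K) else 0)) :=
    Finset.sum_congr rfl fun q _ => by rw [Matrix.smul_apply, aux_Bapp, smul_eq_mul]
  refine e0.trans ((aux_expand K P
    (fun p : Fin n × Fin n => (-(M p.2 p.1)) *
      ((if p.2 = a ∧ p.2 = b then (1:K) else 0) -
       (if p.2 = a ∧ p.1 = b then (1:K) else 0)))).trans ?_)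
  rw [Fintype.sum_prod_type]
  have h1 : ∀ i j : Fin n,
      (if P.lt i j then (-(M j i)) *
          ((if j = a ∧ j = b then (1:K) else 0) -
           (if j = a ∧ i = b then (1:K) else 0)) else 0)
      = if j = a then (if P.lt i a then (-(M a i)) *
          ((if a = b then (1:K) else 0) - (if i = b then (1:K) else 0)) else 0) else 0 := by
    intro i j
    by_cases hj : j = a
    · subst hj; simp
    · simp [hj]
  rw [Finset.sum_congr rfl fun i _ => Finset.sum_congr rfl fun j _ => h1 i j]
  rw [Finset.sum_congr rfl fun i _ => Finset.sum_ite_eq' Finset.univ a _]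
  simp only [Finset.mem_univ, if_true]
  by_cases hab : a = b
  · subst hab
    have h2 : ∀ i : Fin n,
        (if P.lt i a then (-(M a i)) *
            ((if a = a then (1:K) else 0) - (if i = a then (1:K) else 0)) else 0)
        = -(if P.lt i a then M a i else 0) := by
      intro i
      by_cases h : P.lt i a
      · simp [h, h.2]
      · simp [h]
    rw [Finset.sum_congr rfl fun i _ => h2 i, Finset.sum_neg_distrib]
    have hsplit : ∀ c : Fin n, M a c
        = (if c = a then M a a else 0) + (if P.lt c a then M a c else 0) := by
      intro c
      by_cases hc : c = a
      · subst hc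
        simp [show ¬ P.lt c c from fun h => h.2 rfl]
      · simp only [hc, if_false, zero_add]
        by_cases hl : P.lt c a
        · simp [hl]
        · simp only [hl, if_false]
          exact hzero a c fun h => hl ⟨h, hc⟩
    have h3 := hrow a
    rw [Finset.sum_congr rfl fun c _ => hsplit c, Finset.sum_add_distrib,
      Finset.sum_ite_eq' Finset.univ a, if_pos (Finset.mem_univ a)] at h3
    linear_combination -h3
  · have h2 : ∀ i : Fin n,
        (if P.lt i a then (-(M a i)) *
            ((if a = b then (1:K) else 0) - (if i = b then (1:K) else 0)) else 0)
        = if i = b then (if P.lt i a then M a i else 0) else 0 := by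
      intro i
      by_cases hib : i = b
      · subst hib
        by_cases h : P.lt i a <;> simp [h, hab]
      · by_cases h : P.lt i a <;> simp [h, hab, hib]
    rw [Finset.sum_congr rfl fun i _ => h2 i, Finset.sum_ite_eq' Finset.univ b,
      if_pos (Finset.mem_univ b)]
    by_cases hl : P.lt b a
    · rw [if_pos hl]
    · rw [if_neg hl]
      exact (hzero a b fun h => hl ⟨h, fun hba => hab hba.symm⟩).symm

lemma aux_span_eq : Submodule.span K (Set.range (Bfam K P)) = KP0 K P := by
  classical
  haveI : Fintype {q : Fin n × Fin n // P.lt q.1 q.2} := Fintype.ofFinite _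
  apply le_antisymm
  · rw [Submodule.span_le]
    rintro _ ⟨q, rfl⟩
    exact aux_Bmem K P q
  · intro M hM
    rw [aux_decomp K P hM]
    exact Submodule.sum_mem _ fun q _ =>
      Submodule.smul_mem _ _ (Submodule.subset_span ⟨q, rfl⟩)

end Aux

/-- `{E_{jj} − E_{ji} : i ≺ j}` is a `K`-basis of `K₀¹𝒫`; hence
`dim K₀¹𝒫 = |{(i,j) : i ≺ j}|` and `dim K¹𝒫 = 1 + |{(i,j) : i ≺ j}|`. -/
theorem stmt1 (K : Type) [Field K] (n : ℕ) (hn : 1 ≤ n) (P : PosetOn n) :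
    LinearIndependent K (Bfam K P) ∧
    (Submodule.span K (Set.range (Bfam K P)) : Set (Matrix (Fin n) (Fin n) K)) = KP0Set K P ∧
    Module.finrank K (Submodule.span K (Set.range (Bfam K P))) =
      Nat.card {q : Fin n × Fin n // P.lt q.1 q.2} ∧
    (∃ W : Submodule K (Matrix (Fin n) (Fin n) K),
      (W : Set (Matrix (Fin n) (Fin n) K)) = KPoneSet K P ∧
      Module.finrank K W = 1 + Nat.card {q : Fin n × Fin n // P.lt q.1 q.2}) := by
  classical
  haveI : Fintype {q : Fin n × Fin n // P.lt q.1 q.2} := Fintype.ofFinite _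
  have hLI := aux_li K P
  have hspan := aux_span_eq K P
  have hset : (Submodule.span K (Set.range (Bfam K P)) : Set (Matrix (Fin n) (Fin n) K))
      = KP0Set K P := by rw [hspan]; rfl
  have hrank : Module.finrank K (Submodule.span K (Set.range (Bfam K P)))
      = Nat.card {q : Fin n × Fin n // P.lt q.1 q.2} := by
    rw [finrank_span_eq_card hLI, Nat.card_eq_fintype_card]
  refine ⟨hLI, hset, hrank, ?_⟩
  -- the matrix 1 and the submodule W
  set one : Matrix (Fin n) (Fin n) K := 1 with hone
  have hone_ne : one ≠ 0 := by
    intro h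
    have := congrFun (congrFun h ⟨0, hn⟩) ⟨0, hn⟩
    simp [hone, Matrix.one_apply] at this
  have honeKP : one ∈ KPset K P := by
    intro j i h0
    by_cases hji : i = j
    · subst hji; exact P.le_refl _
    · exact absurd (Matrix.one_apply_ne fun h => hji h.symm) h0
  have honevec : ∀ c : K, (c • one) *ᵥ (fun _ => (1:K)) = fun _ => c := by
    intro c
    funext r
    rw [Matrix.smul_mulVec, Matrix.one_mulVec]
    simp
  refine ⟨Submodule.span K (Set.range (Bfam K P)) ⊔ (K ∙ one), ?_, ?_⟩
  · ext M
    simp only [SetLike.mem_coe]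
    constructor
    · intro hM
      obtain ⟨y, hy, z, hz, rfl⟩ := Submodule.mem_sup.mp hM
      obtain ⟨c, rfl⟩ := Submodule.mem_span_singleton.mp hz
      rw [hspan] at hy
      obtain ⟨hy1, hy2⟩ := hy
      refine ⟨aux_KPset_add K P hy1 (aux_KPset_smul K P c honeKP), c, ?_⟩
      rw [Matrix.add_mulVec, hy2, honevec]
      funext r
      simp
    · rintro ⟨h1, c, hc⟩
      have hmem0 : M - c • one ∈ Submodule.span K (Set.range (Bfam K P)) := by
        rw [hspan]
        refine ⟨aux_KPset_sub K P h1 (aux_KPset_smul K P c honeKP), ?_⟩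
        rw [Matrix.sub_mulVec, hc, honevec]
        funext r
        simp
      have : M = (M - c • one) + c • one := by abel
      rw [this]
      exact Submodule.add_mem _ (Submodule.mem_sup_left hmem0)
        (Submodule.mem_sup_right (Submodule.mem_span_singleton.mpr ⟨c, rfl⟩))
  · have hinf : Submodule.span K (Set.range (Bfam K P)) ⊓ (K ∙ one) = ⊥ := by
      rw [eq_bot_iff]
      rintro x ⟨hx0, hx1⟩
      obtain ⟨c, rfl⟩ := Submodule.mem_span_singleton.mp hx1
      rw [hspan] at hx0
      have h := congrFun hx0.2 ⟨0, hn⟩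
      rw [honevec c] at h
      simp only [Pi.zero_apply] at h
      rw [h]
      simp
    have := Submodule.finrank_sup_add_finrank_inf_eq
      (Submodule.span K (Set.range (Bfam K P))) (K ∙ one)
    rw [hinf, finrank_bot, add_zero, hrank, finrank_span_singleton hone_ne] at this
    rw [this, add_comm]
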